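/- For any permutation σ of {1,...,n}, the Kendall distance D(σ) = |{(i,j) : i < j and σ(i) > σ(j)}| and Spearman's footrule F(σ) = Σ_{i=1}^n |i - σ(i)| satisfy D(σ) ≤ F(σ) ≤ 2 D(σ). -/

import Mathlib

open Finset

private lemma card_filter_lt_fin {n : ℕ} (x : Fin n) :
    (univ.filter (fun j : Fin n => j < x)).card = x.val := by
  rw [show univ.filter (fun j : Fin n => j < x) = Finset.Iio x from by ext j; simp]
  exact Fin.card_Iio ..

private lemma card_filter_perm_lt {n : ℕ} (σ : Equiv.Perm (Fin n)) (i : Fin n) :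
    (univ.filter (fun j : Fin n => σ j < σ i)).card = (σ i).val := by
  rw [← card_filter_lt_fin (σ i)]
  exact Finset.card_equiv (σ : Fin n ≃ Fin n) (by simp)

/-- balance: `σ i + a_i = i + b_i` where `a_i, b_i` count inversions with `i` on each side. -/
private lemma balance {n : ℕ} (σ : Equiv.Perm (Fin n)) (i : Fin n) :
    (σ i).val + (univ.filter (fun j : Fin n => j < i ∧ σ i < σ j)).card
      = i.val + (univ.filter (fun j : Fin n => i < j ∧ σ j < σ i)).card := by
  have h1 : (univ.filter (fun j : Fin n => σ j < σ i))
      = (univ.filter (fun j : Fin n => j < i ∧ σ j < σ i))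
        ∪ (univ.filter (fun j : Fin n => i < j ∧ σ j < σ i)) := by
    ext j
    simp only [mem_filter, mem_union, mem_univ, true_and]
    constructor
    · intro h
      rcases lt_trichotomy j i with h' | h' | h'
      · exact Or.inl ⟨h', h⟩
      · exact absurd (h' ▸ h) (lt_irrefl _)
      · exact Or.inr ⟨h', h⟩
    · rintro (⟨_, h⟩ | ⟨_, h⟩) <;> exact h
  have h2 : (univ.filter (fun j : Fin n => j < i))
      = (univ.filter (fun j : Fin n => j < i ∧ σ j < σ i))
        ∪ (univ.filter (fun j : Fin n => j < i ∧ σ i < σ j)) := by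
    ext j
    simp only [mem_filter, mem_union, mem_univ, true_and]
    constructor
    · intro h
      rcases lt_trichotomy (σ j) (σ i) with h' | h' | h'
      · exact Or.inl ⟨h, h'⟩
      · exact absurd (σ.injective h') (ne_of_lt h)
      · exact Or.inr ⟨h, h'⟩
    · rintro (⟨h, _⟩ | ⟨h, _⟩) <;> exact h
  have d1 : Disjoint (univ.filter (fun j : Fin n => j < i ∧ σ j < σ i))
      (univ.filter (fun j : Fin n => i < j ∧ σ j < σ i)) := by
    rw [Finset.disjoint_filter]
    rintro j _ ⟨hj, _⟩ ⟨hj', _⟩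
    exact absurd (hj.trans hj') (lt_irrefl _)
  have d2 : Disjoint (univ.filter (fun j : Fin n => j < i ∧ σ j < σ i))
      (univ.filter (fun j : Fin n => j < i ∧ σ i < σ j)) := by
    rw [Finset.disjoint_filter]
    rintro j _ ⟨_, hj⟩ ⟨_, hj'⟩
    exact absurd (hj.trans hj') (lt_irrefl _)
  have e1 := card_filter_perm_lt σ i
  have e2 := card_filter_lt_fin i
  rw [h1, Finset.card_union_of_disjoint d1] at e1
  rw [h2, Finset.card_union_of_disjoint d2] at e2
  omega

theorem kendall_le_footrule_le_two_kendall (n : ℕ) (σ : Equiv.Perm (Fin n)) :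
    ((Finset.univ.filter (fun p : Fin n × Fin n => p.1 < p.2 ∧ σ p.2 < σ p.1)).card : ℤ)
        ≤ ∑ i : Fin n, |(i : ℤ) - (σ i : ℤ)| ∧
    (∑ i : Fin n, |(i : ℤ) - (σ i : ℤ)|)
        ≤ 2 * ((Finset.univ.filter
            (fun p : Fin n × Fin n => p.1 < p.2 ∧ σ p.2 < σ p.1)).card : ℤ) := by
  set S := Finset.univ.filter (fun p : Fin n × Fin n => p.1 < p.2 ∧ σ p.2 < σ p.1) with hS
  -- a_i and b_i
  set a : Fin n → ℕ := fun i => (univ.filter (fun j : Fin n => j < i ∧ σ i < σ j)).card with ha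
  set b : Fin n → ℕ := fun i => (univ.filter (fun j : Fin n => i < j ∧ σ j < σ i)).card with hb
  have hDb : S.card = ∑ i : Fin n, b i := by
    rw [hS, Finset.card_filter, ← Finset.univ_product_univ, Finset.sum_product]
    refine Finset.sum_congr rfl fun i _ => ?_
    simp only [hb, Finset.card_filter]
  have hDa : S.card = ∑ i : Fin n, a i := by
    rw [hS, Finset.card_filter, ← Finset.univ_product_univ, Finset.sum_product,
      Finset.sum_comm]
    refine Finset.sum_congr rfl fun j _ => ?_
    simp only [ha, Finset.card_filter]
  constructor
  · -- lower bound: injection into T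
    set T := Finset.univ.filter (fun p : Fin n × Fin n =>
      min p.1 (σ p.1) ≤ p.2 ∧ p.2 < max p.1 (σ p.1)) with hT
    have hTcard : (T.card : ℤ) = ∑ i : Fin n, |(i : ℤ) - (σ i : ℤ)| := by
      have : T.card = ∑ i : Fin n,
          (univ.filter (fun k : Fin n => min i (σ i) ≤ k ∧ k < max i (σ i))).card := by
        rw [hT, Finset.card_filter, ← Finset.univ_product_univ, Finset.sum_product]
        refine Finset.sum_congr rfl fun i _ => ?_
        simp only [Finset.card_filter]
      rw [this]
      push_cast
      refine Finset.sum_congr rfl fun i _ => ?_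
      rw [show univ.filter (fun k : Fin n => min i (σ i) ≤ k ∧ k < max i (σ i))
          = Finset.Ico (min i (σ i)) (max i (σ i)) from by ext k; simp [Finset.mem_Ico],
        Fin.card_Ico]
      rcases le_total i (σ i) with h | h
      · have hv : (i : ℕ) ≤ ((σ i : Fin n) : ℕ) := h
        rw [max_eq_right h, min_eq_left h]
        rw [Nat.cast_sub hv]
        rw [abs_of_nonpos (by push_cast; omega)]
        push_cast; try ring
      · have hv : ((σ i : Fin n) : ℕ) ≤ (i : ℕ) := h
        rw [max_eq_left h, min_eq_right h]
        rw [Nat.cast_sub hv]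
        rw [abs_of_nonneg (by push_cast; omega)]
    rw [← hTcard]
    have hle : S.card ≤ T.card := by
      apply Finset.card_le_card_of_injOn
        (fun p => if p.1 ≤ σ p.2 then (p.1, σ p.2) else (p.2, p.1))
      · rintro ⟨i, j⟩ hp
        rw [hS, Finset.mem_coe, Finset.mem_filter] at hp
        obtain ⟨-, hij, hσ⟩ := hp
        by_cases hc : i ≤ σ j
        · simp only [hc, if_pos, hT, Finset.mem_coe, Finset.mem_filter, Finset.mem_univ, true_and]
          exact ⟨le_trans (min_le_left _ _) hc, lt_of_lt_of_le hσ (le_max_right _ _)⟩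
        · push_neg at hc
          simp only [not_le.mpr hc, if_neg, hT, Finset.mem_coe, Finset.mem_filter, Finset.mem_univ, true_and,
            not_false_iff]
          exact ⟨le_of_lt (lt_of_le_of_lt (min_le_right _ _) hc),
            lt_of_lt_of_le hij (le_max_left _ _)⟩
      · rintro ⟨i, j⟩ hp ⟨i', j'⟩ hq heq
        simp only [hS, Finset.coe_filter, Set.mem_setOf_eq, Finset.mem_univ, true_and] at hp hq
        obtain ⟨hij, hσ⟩ := hp
        obtain ⟨hij', hσ'⟩ := hq
        simp only at heq
        split_ifs at heq with hc hc'
        · simp only [Prod.mk.injEq] at heq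
          exact Prod.ext heq.1 (σ.injective heq.2)
        · simp only [Prod.mk.injEq] at heq
          obtain ⟨h1, h2⟩ := heq
          push_neg at hc'
          subst h1; subst h2
          exact absurd (hc'.trans hσ) (lt_irrefl _)
        · simp only [Prod.mk.injEq] at heq
          obtain ⟨h1, h2⟩ := heq
          push_neg at hc
          subst h1; subst h2
          exact absurd (hc.trans hσ') (lt_irrefl _)
        · simp only [Prod.mk.injEq] at heq
          exact Prod.ext heq.2 heq.1
    exact_mod_cast hle
  · -- upper bound
    have key : ∀ i : Fin n, |(i : ℤ) - (σ i : ℤ)| ≤ (a i : ℤ) + (b i : ℤ) := by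
      intro i
      have hbal := balance σ i
      have h2 : ((σ i : Fin n) : ℕ) + a i = (i : ℕ) + b i := by
        simp only [ha, hb]; exact hbal
      rw [abs_le]
      omega
    calc ∑ i : Fin n, |(i : ℤ) - (σ i : ℤ)| ≤ ∑ i : Fin n, ((a i : ℤ) + (b i : ℤ)) :=
          Finset.sum_le_sum fun i _ => key i
      _ = (∑ i : Fin n, (a i : ℤ)) + ∑ i : Fin n, (b i : ℤ) := Finset.sum_add_distrib
      _ = 2 * (S.card : ℤ) := by
          rw [show (∑ i : Fin n, (a i : ℤ)) = ((∑ i : Fin n, a i : ℕ) : ℤ) by push_cast; try ring,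
            show (∑ i : Fin n, (b i : ℤ)) = ((∑ i : Fin n, b i : ℕ) : ℤ) by push_cast; try ring,
            ← hDa, ← hDb]
          ring
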